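/- Let A, B be n×n Hermitian complex matrices with A positive semidefinite, and suppose B is definite on the kernel of A (i.e., either x*Bx > 0 for all nonzero x with Ax = 0, or x*Bx < 0 for all nonzero x with Ax = 0). Then (A,B) is a definite pair: there exists c > 0 such that for every x ∈ ℂⁿ with ‖x‖ = 1, (Re(x*Ax))² + (Re(x*Bx))² ≥ c. -/

import Mathlib

open Matrix
open scoped ComplexOrder

/-- First step in the proof of the paper's Theorem 4.8: if A is positive semidefinite
and B is definite on the kernel of A, then (A, B) is a definite pair. -/
theorem semidefinite_plus_kernel_definite_is_definite_pair {n : ℕ}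
    (A B : Matrix (Fin n) (Fin n) ℂ)
    (hA : A.PosSemidef) (hB : B.IsHermitian)
    (hdef : (∀ x : Fin n → ℂ, x ≠ 0 → A.mulVec x = 0 → 0 < (star x ⬝ᵥ B.mulVec x).re) ∨
            (∀ x : Fin n → ℂ, x ≠ 0 → A.mulVec x = 0 → (star x ⬝ᵥ B.mulVec x).re < 0)) :
    ∃ c > (0 : ℝ), ∀ x : EuclideanSpace ℂ (Fin n), ‖x‖ = 1 →
      c ≤ (star (x : Fin n → ℂ) ⬝ᵥ A.mulVec (x : Fin n → ℂ)).re ^ 2 +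
          (star (x : Fin n → ℂ) ⬝ᵥ B.mulVec (x : Fin n → ℂ)).re ^ 2 := by
  by_cases hS : (Metric.sphere (0 : EuclideanSpace ℂ (Fin n)) 1).Nonempty
  · set f : EuclideanSpace ℂ (Fin n) → ℝ := fun x =>
      (star (x : Fin n → ℂ) ⬝ᵥ A.mulVec (x : Fin n → ℂ)).re ^ 2 +
      (star (x : Fin n → ℂ) ⬝ᵥ B.mulVec (x : Fin n → ℂ)).re ^ 2 with hf
    have hcoe : Continuous (⇑(WithLp.equiv 2 (Fin n → ℂ))) :=
      PiLp.continuous_ofLp (p := 2) (β := fun _ : Fin n => ℂ)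
    have hAc : Continuous fun y : Fin n → ℂ => (star y ⬝ᵥ A.mulVec y).re ^ 2 :=
      (Complex.continuous_re.comp
        (continuous_star.dotProduct (continuous_const.matrix_mulVec continuous_id))).pow 2
    have hBc : Continuous fun y : Fin n → ℂ => (star y ⬝ᵥ B.mulVec y).re ^ 2 :=
      (Complex.continuous_re.comp
        (continuous_star.dotProduct (continuous_const.matrix_mulVec continuous_id))).pow 2
    have hcont : Continuous f := (hAc.comp hcoe).add (hBc.comp hcoe)
    obtain ⟨x0, hx0, hmin⟩ := (isCompact_sphere (0 : EuclideanSpace ℂ (Fin n)) 1).exists_isMinOn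
      hS hcont.continuousOn
    refine ⟨f x0, ?_, fun x hx => hmin (by simpa using hx)⟩
    have hx0norm : ‖x0‖ = 1 := by simpa using hx0
    have hx0ne : (x0 : Fin n → ℂ) ≠ 0 := by
      intro h
      have : x0 = 0 := by
        ext i; exact congrFun h i
      simp [this] at hx0norm
    have hnonneg : 0 ≤ f x0 := add_nonneg (sq_nonneg _) (sq_nonneg _)
    rcases lt_or_eq_of_le hnonneg with h | h
    · exact h
    exfalso
    have h' : (star (x0 : Fin n → ℂ) ⬝ᵥ A.mulVec (x0 : Fin n → ℂ)).re ^ 2 +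
        (star (x0 : Fin n → ℂ) ⬝ᵥ B.mulVec (x0 : Fin n → ℂ)).re ^ 2 = 0 := h.symm
    have hA0 : (star (x0 : Fin n → ℂ) ⬝ᵥ A.mulVec (x0 : Fin n → ℂ)).re = 0 ∧
        (star (x0 : Fin n → ℂ) ⬝ᵥ B.mulVec (x0 : Fin n → ℂ)).re = 0 := by
      constructor
      · have : (star (x0 : Fin n → ℂ) ⬝ᵥ A.mulVec (x0 : Fin n → ℂ)).re ^ 2 = 0 := by
          nlinarith [sq_nonneg (star (x0 : Fin n → ℂ) ⬝ᵥ A.mulVec (x0 : Fin n → ℂ)).re,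
            sq_nonneg (star (x0 : Fin n → ℂ) ⬝ᵥ B.mulVec (x0 : Fin n → ℂ)).re]
        exact pow_eq_zero_iff two_ne_zero |>.mp this
      · have : (star (x0 : Fin n → ℂ) ⬝ᵥ B.mulVec (x0 : Fin n → ℂ)).re ^ 2 = 0 := by
          nlinarith [sq_nonneg (star (x0 : Fin n → ℂ) ⬝ᵥ A.mulVec (x0 : Fin n → ℂ)).re,
            sq_nonneg (star (x0 : Fin n → ℂ) ⬝ᵥ B.mulVec (x0 : Fin n → ℂ)).re]
        exact pow_eq_zero_iff two_ne_zero |>.mp this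
    have hAq : star (x0 : Fin n → ℂ) ⬝ᵥ A.mulVec (x0 : Fin n → ℂ) = 0 := by
      have hpos := Complex.nonneg_iff.mp (hA.dotProduct_mulVec_nonneg (x0 : Fin n → ℂ))
      apply Complex.ext
      · exact hA0.1
      · simpa using hpos.2.symm
    have hker : A.mulVec (x0 : Fin n → ℂ) = 0 :=
      (hA.dotProduct_mulVec_zero_iff (x0 : Fin n → ℂ)).mp hAq
    rcases hdef with hd | hd
    · exact absurd hA0.2 (ne_of_gt (hd _ hx0ne hker))
    · exact absurd hA0.2 (ne_of_lt (hd _ hx0ne hker))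
  · exact ⟨1, one_pos, fun x hx => absurd ⟨x, by simpa using hx⟩ hS⟩
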